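/- Let ≤_T be the lexicographic order with X₁ > X₂. Let e ∈ 𝔽(r₁,r₂) and τ ∈ 𝓘, let U be the syndrome table afforded by τ and e, and suppose ω(e) ≤ t ≤ 4, t ≥ 1, t ≤ ⌊r₁/2⌋, t ≤ ⌊r₂/2⌋, and u_{(0,j)} ≠ 0 for some j < t. Let F = {f^(1),…,f^(d)} ⊆ L[X₁,X₂] be a minimal set of polynomials for the subarray of U indexed by B(2t+1): the defining points s^(i) = LP(f^(i)) satisfy s^(1)_1 > … > s^(d)_1 = 0 and 0 = s^(1)_2 < … < s^(d)_2; each f^(i) satisfies f^(i)[U]_k = 0 for every k ∈ B(2t+1) with s^(i) ⪯ k; and every nonzero g ∈ L[X₁,X₂] with LP(g) ∈ ∪_{i=1}^{d−1}{n : n ⪯ (s^(i)_1 − 1, s^(i+1)_2 − 1)} satisfies g[U]_k ≠ 0 for some k ∈ B(2t+1) with LP(g) ⪯ k. Then F is a Gröbner basis of the ideal Λ(U) with respect to ≤_T. -/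

import Mathlib

/-- A monomial order on ℕ × ℕ: a linear order compatible with addition
for which (0,0) is the least element. -/
structure MonOrd where
  le : ℕ × ℕ → ℕ × ℕ → Prop
  refl : ∀ a, le a a
  trans : ∀ a b c, le a b → le b c → le a c
  antisymm : ∀ a b, le a b → le b a → a = b
  total : ∀ a b, le a b ∨ le b a
  add_right : ∀ a b c, le a b → le (a + c) (b + c)
  zero_le : ∀ a, le (0, 0) a

/-- Strict version of a monomial order. -/
def MonOrd.lt (T : MonOrd) (a b : ℕ × ℕ) : Prop := T.le a b ∧ a ≠ b

/-- `s` is the leading power product exponent of `f` w.r.t. `T`. -/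
def IsLP {L : Type} [Field L] (T : MonOrd) (f : (ℕ × ℕ) →₀ L) (s : ℕ × ℕ) : Prop :=
  s ∈ f.support ∧ ∀ m ∈ f.support, T.le m s

/-- `f[U]_n`, computed with respect to a given leading exponent `s` of `f`. -/
noncomputable def fApp {L : Type} [Field L] (U : ℕ × ℕ → L) (f : (ℕ × ℕ) →₀ L)
    (s n : ℕ × ℕ) : L :=
  if s.1 ≤ n.1 ∧ s.2 ≤ n.2 then
    ∑ m ∈ f.support, f m * U (m.1 + n.1 - s.1, m.2 + n.2 - s.2)
  else 0

/-- `f` generates the doubly periodic array `U`. -/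
def GeneratesU {L : Type} [Field L] (T : MonOrd) (U : ℕ × ℕ → L) (f : (ℕ × ℕ) →₀ L) : Prop :=
  ∃ s, IsLP T f s ∧ ∀ n, fApp U f s n = 0

/-- `f` generates the finite subarray `u^l` of `U`. -/
def GeneratesUpTo {L : Type} [Field L] (T : MonOrd) (U : ℕ × ℕ → L) (l : ℕ × ℕ)
    (f : (ℕ × ℕ) →₀ L) : Prop :=
  ∃ s, IsLP T f s ∧ ∀ k, s.1 ≤ k.1 → s.2 ≤ k.2 → T.lt k l → fApp U f s k = 0

/-- `U` is a doubly periodic array of period r₁ × r₂. -/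
def DoublyPeriodic {L : Type} (r₁ r₂ : ℕ) (U : ℕ × ℕ → L) : Prop :=
  ∀ n m : ℕ × ℕ, n.1 % r₁ = m.1 % r₁ → n.2 % r₂ = m.2 % r₂ → U n = U m

/-- Evaluation of a bivariate polynomial at a point `(x, y)`. -/
noncomputable def polyEval {L : Type} [Field L] (f : (ℕ × ℕ) →₀ L) (x y : L) : L :=
  ∑ m ∈ f.support, f m * x ^ m.1 * y ^ m.2

/-- The syndrome table afforded by `τ` and `e`:  `u_n = e(α^(τ+n))`. -/
noncomputable def synTable {F L : Type} [Field F] [Field L] [Algebra F L] {r₁ r₂ : ℕ}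
    (α₁ α₂ : L) (τ : Fin r₁ × Fin r₂) (e : Fin r₁ × Fin r₂ → F) : ℕ × ℕ → L :=
  fun n => ∑ p : Fin r₁ × Fin r₂,
    algebraMap F L (e p) * (α₁ ^ ((τ.1 : ℕ) + n.1)) ^ (p.1 : ℕ)
      * (α₂ ^ ((τ.2 : ℕ) + n.2)) ^ (p.2 : ℕ)

/-- The weight ω(e): number of nonzero coefficients. -/
noncomputable def wt {F : Type} [Field F] {r₁ r₂ : ℕ} (e : Fin r₁ × Fin r₂ → F) : ℕ :=
  {p | e p ≠ 0}.ncard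

/-- The hyperbolic set B(δ) of amplitude δ inside {0,…,r₁−1} × {0,…,r₂−1}. -/
def hypB (r₁ r₂ δ : ℕ) : Set (ℕ × ℕ) :=
  {l | l.1 < r₁ ∧ l.2 < r₂ ∧ (l.1 + 1) * (l.2 + 1) ≤ δ ∧ l ≠ (δ - 1, 0) ∧ l ≠ (0, δ - 1)}

/-- The border set 𝔉 = {l ∈ B(2t+1) : 2t ≤ (l₁+1)(l₂+1)}. -/
def frontF (r₁ r₂ t : ℕ) : Set (ℕ × ℕ) :=
  {l ∈ hypB r₁ r₂ (2 * t + 1) | 2 * t ≤ (l.1 + 1) * (l.2 + 1)}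

/-- The lexicographic order with X₁ > X₂. -/
def lexMonOrd : MonOrd where
  le a b := a.1 < b.1 ∨ (a.1 = b.1 ∧ a.2 ≤ b.2)
  refl a := by omega
  trans a b c h1 h2 := by omega
  antisymm a b h1 h2 := by
    obtain ⟨a1, a2⟩ := a; obtain ⟨b1, b2⟩ := b
    simp_all only [Prod.mk.injEq]; omega
  total a b := by omega
  add_right a b c h := by
    obtain ⟨a1, a2⟩ := a; obtain ⟨b1, b2⟩ := b; obtain ⟨c1, c2⟩ := c
    simp_all only [Prod.mk_add_mk]; omega
  zero_le a := by
    obtain ⟨a1, a2⟩ := a; simp only []; omega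

/-- The (reverse) graded order with X₂ > X₁. -/
def grMonOrd : MonOrd where
  le a b := a.1 + a.2 < b.1 + b.2 ∨ (a.1 + a.2 = b.1 + b.2 ∧ a.2 ≤ b.2)
  refl a := by omega
  trans a b c h1 h2 := by omega
  antisymm a b h1 h2 := by
    obtain ⟨a1, a2⟩ := a; obtain ⟨b1, b2⟩ := b
    simp_all only [Prod.mk.injEq]; omega
  total a b := by omega
  add_right a b c h := by
    obtain ⟨a1, a2⟩ := a; obtain ⟨b1, b2⟩ := b; obtain ⟨c1, c2⟩ := c
    simp_all only [Prod.mk_add_mk]; omega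
  zero_le a := by
    obtain ⟨a1, a2⟩ := a; simp only []; omega

/-- The ideal (X₁^{r₁} − 1, X₂^{r₂} − 1) of L[X₁,X₂]. -/
noncomputable def periodIdeal (L : Type) [Field L] (r₁ r₂ : ℕ) :
    Ideal (AddMonoidAlgebra L (ℕ × ℕ)) :=
  Ideal.span {AddMonoidAlgebra.single (r₁, 0) 1 - 1, AddMonoidAlgebra.single (0, r₂) 1 - 1}


open scoped Classical in
/-- Number of `y`-groups of `S` having at least `a+1` elements. -/
noncomputable def muS {L : Type} [Field L] (S : Finset (L × L)) (a : ℕ) : ℕ :=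
  ((S.image Prod.snd).filter fun η => a + 1 ≤ (S.filter fun Q => Q.2 = η).card).card

/-- Univariate Vandermonde-style lemma. -/
lemma vand1 {L : Type} [Field L] (xs : Finset L) :
    ∀ v : L → L, (∀ a < xs.card, ∑ x ∈ xs, v x * x ^ a = 0) → ∀ x ∈ xs, v x = 0 := by
  classical
  induction xs using Finset.strongInduction with
  | _ xs ih =>
    intro v hv x hx
    have hcard : 0 < xs.card := Finset.card_pos.mpr ⟨x, hx⟩
    have herase : xs.erase x ⊂ xs := Finset.erase_ssubset hx
    have hkey : ∀ a < (xs.erase x).card, ∑ z ∈ xs.erase x, (v z * (z - x)) * z ^ a = 0 := by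
      intro a ha
      have h1 : ∑ z ∈ xs.erase x, (v z * (z - x)) * z ^ a
          = ∑ z ∈ xs, (v z * (z - x)) * z ^ a := by
        rw [← Finset.add_sum_erase _ _ hx]
        simp
      have h2 : ∑ z ∈ xs, (v z * (z - x)) * z ^ a
          = (∑ z ∈ xs, v z * z ^ (a + 1)) - x * ∑ z ∈ xs, v z * z ^ a := by
        rw [Finset.mul_sum, ← Finset.sum_sub_distrib]
        apply Finset.sum_congr rfl
        intro z _; ring
      have hlt : a + 1 < xs.card := by
        have := Finset.card_erase_of_mem hx; omega
      rw [h1, h2, hv (a+1) hlt, hv a (by omega)]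
      ring
    have hz : ∀ z ∈ xs.erase x, v z * (z - x) = 0 := ih _ herase _ hkey
    have hz' : ∀ z ∈ xs.erase x, v z = 0 := by
      intro z hz2
      have hne : z ≠ x := Finset.ne_of_mem_erase hz2
      have := hz z hz2
      rcases mul_eq_zero.mp this with h | h
      · exact h
      · exact absurd (sub_eq_zero.mp h) hne
    have h0 := hv 0 hcard
    rw [← Finset.add_sum_erase _ _ hx] at h0
    have : ∑ z ∈ xs.erase x, v z * z ^ 0 = 0 :=
      Finset.sum_eq_zero fun z hz2 => by rw [hz' z hz2]; ring
    rw [this, add_zero, pow_zero, mul_one] at h0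
    exact h0

/-- Points of a finite set `S ⊆ L²` are separated by monomials whose exponents
lie under the conjugate partition staircase of the `y`-group sizes. -/
lemma lemS {L : Type} [Field L] :
    ∀ (n : ℕ) (S : Finset (L × L)), S.card = n → ∀ v : L × L → L,
      (∀ a b : ℕ, b < muS S a → ∑ Q ∈ S, v Q * Q.1 ^ a * Q.2 ^ b = 0) →
      ∀ Q ∈ S, v Q = 0 := by
  classical
  intro n
  induction n using Nat.strong_induction_on with
  | _ n ih =>
    intro S hcard v hv Q0 hQ0
    have hSne : S.Nonempty := ⟨Q0, hQ0⟩
    have hTne : (S.image Prod.snd).Nonempty := hSne.image _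
    obtain ⟨η, hηT, hηmax⟩ := Finset.exists_max_image (S.image Prod.snd)
      (fun η => (S.filter fun Q => Q.2 = η).card) hTne
    set G : Finset (L × L) := S.filter (fun Q => Q.2 = η) with hG
    set S' : Finset (L × L) := S.filter (fun Q => ¬ Q.2 = η) with hS'
    have hGne : G.Nonempty := by
      obtain ⟨P, hP, hPη⟩ := Finset.mem_image.mp hηT
      exact ⟨P, Finset.mem_filter.mpr ⟨hP, hPη⟩⟩
    have hsplit : G.card + S'.card = S.card :=
      Finset.card_filter_add_card_filter_not _
    have hS'lt : S'.card < n := by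
      have := Finset.card_pos.mpr hGne; omega
    -- groups of S' for η' ≠ η agree with groups of S
    have hgrp : ∀ η', η' ≠ η → S'.filter (fun Q => Q.2 = η') = S.filter (fun Q => Q.2 = η') := by
      intro η' hne
      ext P
      simp only [hS', Finset.mem_filter, and_assoc]
      constructor
      · rintro ⟨h1, _, h3⟩; exact ⟨h1, h3⟩
      · rintro ⟨h1, h3⟩; exact ⟨h1, by rw [h3]; exact hne, h3⟩
    have himg : S'.image Prod.snd = (S.image Prod.snd).erase η := by
      ext η'
      simp only [Finset.mem_image, Finset.mem_erase, hS', Finset.mem_filter]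
      constructor
      · rintro ⟨P, ⟨hP, hne⟩, rfl⟩; exact ⟨hne, P, hP, rfl⟩
      · rintro ⟨hne, P, hP, rfl⟩; exact ⟨P, ⟨hP, hne⟩, rfl⟩
    -- μ decreases strictly
    have hmu : ∀ a, 0 < muS S' a → muS S' a + 1 ≤ muS S a := by
      intro a hpos
      have hsub : (S'.image Prod.snd).filter
            (fun η' => a + 1 ≤ (S'.filter fun Q => Q.2 = η').card)
          ⊆ ((S.image Prod.snd).filter
            (fun η' => a + 1 ≤ (S.filter fun Q => Q.2 = η').card)).erase η := by
        intro η' hη'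
        obtain ⟨hη'T, hη'c⟩ := Finset.mem_filter.mp hη'
        have hne : η' ≠ η := (Finset.mem_erase.mp (himg ▸ hη'T)).1
        refine Finset.mem_erase.mpr ⟨hne, Finset.mem_filter.mpr ⟨?_, ?_⟩⟩
        · exact (Finset.mem_erase.mp (himg ▸ hη'T)).2
        · rw [← hgrp η' hne]; exact hη'c
      have hηin : η ∈ (S.image Prod.snd).filter
          (fun η' => a + 1 ≤ (S.filter fun Q => Q.2 = η').card) := by
        obtain ⟨η', hη'⟩ := Finset.card_pos.mp hpos
        obtain ⟨hη'T, hη'c⟩ := Finset.mem_filter.mp hη'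
        have hne : η' ≠ η := (Finset.mem_erase.mp (himg ▸ hη'T)).1
        have h1 : a + 1 ≤ (S.filter fun Q => Q.2 = η').card := by
          rw [← hgrp η' hne]; exact hη'c
        have h2 : η' ∈ S.image Prod.snd := (Finset.mem_erase.mp (himg ▸ hη'T)).2
        exact Finset.mem_filter.mpr ⟨hηT, le_trans h1 (hηmax η' h2)⟩
      have h3 := Finset.card_le_card hsub
      rw [Finset.card_erase_of_mem hηin] at h3
      have h4 := Finset.card_pos.mpr ⟨η, hηin⟩
      have e1 : muS S' a = ((S'.image Prod.snd).filter
          (fun η' => a + 1 ≤ (S'.filter fun Q => Q.2 = η').card)).card := rfl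
      have e2 : muS S a = ((S.image Prod.snd).filter
          (fun η' => a + 1 ≤ (S.filter fun Q => Q.2 = η').card)).card := rfl
      rw [e1] at hpos ⊢
      rw [e2]
      omega
    -- apply induction hypothesis to S' with v' = v ⬝ (y − η)
    have hv' : ∀ a b : ℕ, b < muS S' a →
        ∑ P ∈ S', (v P * (P.2 - η)) * P.1 ^ a * P.2 ^ b = 0 := by
      intro a b hb
      have hble := hmu a (by omega)
      have h1 : ∑ P ∈ S', (v P * (P.2 - η)) * P.1 ^ a * P.2 ^ b
          = ∑ P ∈ S, (v P * (P.2 - η)) * P.1 ^ a * P.2 ^ b := by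
        apply Finset.sum_subset (Finset.filter_subset _ _)
        intro P hP hPn
        have : P.2 = η := by
          by_contra hc
          exact hPn (Finset.mem_filter.mpr ⟨hP, hc⟩)
        rw [this, sub_self]; ring
      have h2 : ∑ P ∈ S, (v P * (P.2 - η)) * P.1 ^ a * P.2 ^ b
          = (∑ P ∈ S, v P * P.1 ^ a * P.2 ^ (b + 1))
            - η * ∑ P ∈ S, v P * P.1 ^ a * P.2 ^ b := by
        rw [Finset.mul_sum, ← Finset.sum_sub_distrib]
        apply Finset.sum_congr rfl
        intro P _; ring
      rw [h1, h2, hv a (b+1) (by omega), hv a b (by omega)]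
      ring
    have hvS' : ∀ P ∈ S', v P = 0 := by
      intro P hP
      have := ih S'.card hS'lt S' rfl _ hv' P hP
      have hne : P.2 ≠ η := (Finset.mem_filter.mp hP).2
      rcases mul_eq_zero.mp this with h | h
      · exact h
      · exact absurd (sub_eq_zero.mp h) hne
    -- now the group G via univariate Vandermonde
    have hvG : ∀ P ∈ G, v P = 0 := by
      intro P hPG
      set xs : Finset L := G.image Prod.fst with hxs
      have hinj : ∀ P1 ∈ G, ∀ P2 ∈ G, P1.1 = P2.1 → P1 = P2 := by
        intro P1 h1 P2 h2 h12
        have e1 : P1.2 = η := (Finset.mem_filter.mp h1).2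
        have e2 : P2.2 = η := (Finset.mem_filter.mp h2).2
        exact Prod.ext h12 (by rw [e1, e2])
      have hxscard : xs.card = G.card := Finset.card_image_of_injOn
        (fun P1 h1 P2 h2 h12 => hinj P1 h1 P2 h2 h12)
      have hGmem : ∀ P' ∈ G, ((P'.1 : L), η) = P' := by
        intro P' h'
        have : P'.2 = η := (Finset.mem_filter.mp h').2
        exact Prod.ext rfl this.symm
      have hvx : ∀ a < xs.card, ∑ x ∈ xs, (fun x => v (x, η)) x * x ^ a = 0 := by
        intro a ha
        have h1 : ∑ x ∈ xs, v (x, η) * x ^ a = ∑ P' ∈ G, v (P'.1, η) * P'.1 ^ a :=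
          Finset.sum_image fun P1 h1 P2 h2 h12 => hinj P1 h1 P2 h2 h12
        have h2 : ∑ P' ∈ G, v (P'.1, η) * P'.1 ^ a = ∑ P' ∈ G, v P' * P'.1 ^ a * P'.2 ^ 0 := by
          apply Finset.sum_congr rfl
          intro P' h'
          rw [hGmem P' h', pow_zero, mul_one]
        have h3 : ∑ P' ∈ G, v P' * P'.1 ^ a * P'.2 ^ 0
            = ∑ P' ∈ S, v P' * P'.1 ^ a * P'.2 ^ 0 := by
          apply Finset.sum_subset (Finset.filter_subset _ _)
          intro P' hP' hP'n
          have : P'.2 ≠ η := fun hc => hP'n (Finset.mem_filter.mpr ⟨hP', hc⟩)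
          rw [hvS' P' (Finset.mem_filter.mpr ⟨hP', this⟩)]; ring
        have hmu0 : 0 < muS S a := by
          have : η ∈ (S.image Prod.snd).filter
              (fun η' => a + 1 ≤ (S.filter fun Q => Q.2 = η').card) := by
            refine Finset.mem_filter.mpr ⟨hηT, ?_⟩
            have hx2 : xs.card = (S.filter fun Q => Q.2 = η).card := by
              rw [hxscard]
            omega
          have e2 : muS S a = ((S.image Prod.snd).filter
              (fun η' => a + 1 ≤ (S.filter fun Q => Q.2 = η').card)).card := rfl
          rw [e2]
          exact Finset.card_pos.mpr ⟨η, this⟩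
        rw [h1, h2, h3]
        exact hv a 0 hmu0
      have := vand1 xs _ hvx P.1 (Finset.mem_image_of_mem _ hPG)
      rw [hGmem P hPG] at this
      exact this
    by_cases hQη : Q0.2 = η
    · exact hvG Q0 (Finset.mem_filter.mpr ⟨hQ0, hQη⟩)
    · exact hvS' Q0 (Finset.mem_filter.mpr ⟨hQ0, hQη⟩)

lemma muS_anti {L : Type} [Field L] (S : Finset (L × L)) :
    ∀ x y : ℕ, x ≤ y → muS S y ≤ muS S x := by
  classical
  intro x y hxy
  have e1 : muS S y = ((S.image Prod.snd).filter
      (fun η => y + 1 ≤ (S.filter fun Q => Q.2 = η).card)).card := rfl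
  have e2 : muS S x = ((S.image Prod.snd).filter
      (fun η => x + 1 ≤ (S.filter fun Q => Q.2 = η).card)).card := rfl
  rw [e1, e2]
  apply Finset.card_le_card
  intro η hη
  rw [Finset.mem_filter] at hη ⊢
  exact ⟨hη.1, by omega⟩

lemma muS_sum_le {L : Type} [Field L] (S : Finset (L × L)) :
    muS S 0 + muS S 1 + muS S 2 + muS S 3 + muS S 4 ≤ S.card := by
  classical
  have hcard : S.card = ∑ η ∈ S.image Prod.snd, (S.filter fun Q => Q.2 = η).card :=
    Finset.card_eq_sum_card_fiberwise (fun Q hQ => Finset.mem_image_of_mem _ hQ)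
  have hmu : ∀ a : ℕ, muS S a = ∑ η ∈ S.image Prod.snd,
      if a + 1 ≤ (S.filter fun Q => Q.2 = η).card then 1 else 0 := by
    intro a
    have e1 : muS S a = ((S.image Prod.snd).filter
        (fun η => a + 1 ≤ (S.filter fun Q => Q.2 = η).card)).card := rfl
    rw [e1, Finset.card_filter]
  rw [hmu 0, hmu 1, hmu 2, hmu 3, hmu 4, ← Finset.sum_add_distrib, ← Finset.sum_add_distrib,
    ← Finset.sum_add_distrib, ← Finset.sum_add_distrib, hcard]
  apply Finset.sum_le_sum
  intro η _
  split_ifs <;> omega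

/-- Arithmetic core: staircase corners compatible with a conjugate-partition bound
keep the shifted staircase inside the hyperbolic region `B(2t+1)`. -/
lemma claimArith (t : ℕ) (μ : ℕ → ℕ) (hanti : ∀ x y : ℕ, x ≤ y → μ y ≤ μ x)
    (hsum : μ 0 + μ 1 + μ 2 + μ 3 + μ 4 ≤ t) (ht4 : t ≤ 4) (s1 s2 : ℕ)
    (hcase : (s2 = 0 ∧ (s1 = 0 ∨ 1 ≤ μ (s1 - 1))) ∨
             (1 ≤ s1 ∧ 1 ≤ s2 ∧ s2 ≤ μ s1 ∧ s2 + 1 ≤ μ (s1 - 1)) ∨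
             (s1 = 0 ∧ s2 ≤ μ 0))
    (a b : ℕ) (hb : b < μ a) :
    (s1 + a + 1) * (s2 + b + 1) ≤ 2 * t + 1 ∧ s1 + a + 1 ≤ 2 * t ∧ s2 + b + 1 ≤ 2 * t := by
  have h01 : μ 1 ≤ μ 0 := hanti 0 1 (by omega)
  have h12 : μ 2 ≤ μ 1 := hanti 1 2 (by omega)
  have h23 : μ 3 ≤ μ 2 := hanti 2 3 (by omega)
  have h34 : μ 4 ≤ μ 3 := hanti 3 4 (by omega)
  have ha3 : a ≤ 3 := by
    by_contra hc
    have h4a : μ a ≤ μ 4 := hanti 4 a (by omega)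
    omega
  have hs1 : s1 ≤ 4 := by
    rcases hcase with ⟨_, rfl | hmu⟩ | ⟨h1, h2, h3, h4⟩ | ⟨rfl, _⟩
    · omega
    · by_contra hc
      have : μ (s1 - 1) ≤ μ 4 := hanti 4 (s1 - 1) (by omega)
      omega
    · by_contra hc
      have : μ (s1 - 1) ≤ μ 4 := hanti 4 (s1 - 1) (by omega)
      omega
    · omega
  rcases hcase with ⟨rfl, hs⟩ | ⟨h1, h2, h3, h4⟩ | ⟨rfl, hs⟩
  · rcases hs with rfl | hmu
    · interval_cases a <;> omega
    · interval_cases s1 <;> norm_num at hmu <;> interval_cases a <;> omega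
  · have hs1' : s1 ≤ 3 := by
      by_contra hc
      have : μ s1 ≤ μ 4 := hanti 4 s1 (by omega)
      omega
    interval_cases s1 <;> norm_num at h3 h4 <;> interval_cases a <;> omega
  · interval_cases a <;> omega

lemma uncurry_apply' {M : Type} [AddCommMonoid M] (f : ℕ →₀ ℕ →₀ M) (a b : ℕ) :
    Finsupp.uncurry f (a, b) = f a b := by
  have h : Finsupp.curry (Finsupp.uncurry f) = f :=
    Finsupp.finsuppProdEquiv.right_inv f
  conv_rhs => rw [← h]
  rw [Finsupp.curry_apply]

/-- Convert an iterated polynomial (outer variable = X₁, inner variable = X₂)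
to a finitely supported function on `ℕ × ℕ`. -/
noncomputable def toF {L : Type} [Field L] (g : Polynomial (Polynomial L)) : (ℕ × ℕ) →₀ L :=
  Finsupp.uncurry (g.toFinsupp.coeff.mapRange (fun p : Polynomial L => p.toFinsupp.coeff)
    (show (Polynomial.toFinsupp (0 : Polynomial L)).coeff = 0 by rw [Polynomial.toFinsupp_zero]; rfl))

lemma toF_apply {L : Type} [Field L] (g : Polynomial (Polynomial L)) (a b : ℕ) :
    toF g (a, b) = (g.coeff a).coeff b := by
  rw [toF, uncurry_apply', Finsupp.mapRange_apply]
  rfl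

lemma toF_add {L : Type} [Field L] (g h : Polynomial (Polynomial L)) :
    toF (g + h) = toF g + toF h := by
  ext m
  obtain ⟨a, b⟩ := m
  simp [toF_apply]

lemma toF_single {L : Type} [Field L] (n m : ℕ) (l : L) :
    toF (Polynomial.monomial n (Polynomial.monomial m l)) = Finsupp.single (n, m) l := by
  ext mm
  obtain ⟨a, b⟩ := mm
  rw [toF_apply, Finsupp.single_apply, Polynomial.coeff_monomial]
  by_cases h1 : n = a
  · subst h1
    rw [if_pos rfl, Polynomial.coeff_monomial]
    by_cases h2 : m = b
    · subst h2; rw [if_pos rfl, if_pos rfl]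
    · rw [if_neg h2, if_neg (by simp [Prod.ext_iff, h2])]
  · rw [if_neg h1, Polynomial.coeff_zero, if_neg (by simp [Prod.ext_iff, h1])]

lemma polyEval_add {L : Type} [Field L] (g h : (ℕ × ℕ) →₀ L) (x y : L) :
    polyEval (g + h) x y = polyEval g x y + polyEval h x y := by
  unfold polyEval
  have : ∀ f : (ℕ × ℕ) →₀ L, ∑ m ∈ f.support, f m * x ^ m.1 * y ^ m.2
      = f.sum fun m c => c * x ^ m.1 * y ^ m.2 := fun f => rfl
  rw [this, this, this]
  exact Finsupp.sum_add_index' (fun m => by simp) (fun m c1 c2 => by ring)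

lemma polyEval_single {L : Type} [Field L] (nm : ℕ × ℕ) (l : L) (x y : L) :
    polyEval (Finsupp.single nm l) x y = l * x ^ nm.1 * y ^ nm.2 := by
  unfold polyEval
  have : ∑ m ∈ (Finsupp.single nm l).support, (Finsupp.single nm l) m * x ^ m.1 * y ^ m.2
      = (Finsupp.single nm l).sum fun m c => c * x ^ m.1 * y ^ m.2 := rfl
  rw [this, Finsupp.sum_single_index (by simp)]

lemma polyEval_toF {L : Type} [Field L] (g : Polynomial (Polynomial L)) (x y : L) :
    polyEval (toF g) x y = Polynomial.eval₂ (Polynomial.evalRingHom y) x g := by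
  induction g using Polynomial.induction_on' with
  | add p q hp hq =>
    rw [toF_add, polyEval_add, hp, hq, Polynomial.eval₂_add]
  | monomial n p =>
    induction p using Polynomial.induction_on' with
    | add p1 p2 hp1 hp2 =>
      rw [map_add, toF_add, polyEval_add, hp1, hp2, Polynomial.eval₂_add]
    | monomial m l =>
      rw [toF_single, polyEval_single, Polynomial.eval₂_monomial]
      simp only [Polynomial.coe_evalRingHom, Polynomial.eval_monomial]
      ring

/-- For every `c` there is a polynomial vanishing on `S` whose lex leading
exponent is exactly `(c, muS S c)`. -/
lemma construct {L : Type} [Field L] (S : Finset (L × L)) (c : ℕ) :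
    ∃ g : (ℕ × ℕ) →₀ L, IsLP lexMonOrd g (c, muS S c) ∧
      ∀ P ∈ S, polyEval g P.1 P.2 = 0 := by
  classical
  set T : Finset L := S.image Prod.snd with hT
  set gc : L → ℕ := fun η => (S.filter fun Q => Q.2 = η).card with hgc
  set Tb : Finset L := T.filter (fun η => c + 1 ≤ gc η) with hTb
  set Ts : Finset L := T.filter (fun η => ¬ (c + 1 ≤ gc η)) with hTs
  have hmu : muS S c = Tb.card := rfl
  set Pi : Polynomial L := ∏ η ∈ Tb, (Polynomial.X - Polynomial.C η) with hPi
  have hPimonic : Pi.Monic :=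
    Polynomial.monic_prod_of_monic _ _ (fun η _ => Polynomial.monic_X_sub_C η)
  have hPideg : Pi.natDegree = Tb.card := by
    rw [hPi, Polynomial.natDegree_prod _ _ (fun η _ => Polynomial.X_sub_C_ne_zero η)]
    simp
  set xs : L → Finset L := fun η => (S.filter fun Q => Q.2 = η).image Prod.fst with hxs
  have hxscard : ∀ η, (xs η).card = gc η := by
    intro η
    apply Finset.card_image_of_injOn
    intro P1 h1 P2 h2 h12
    have e1 : P1.2 = η := (Finset.mem_filter.mp h1).2
    have e2 : P2.2 = η := (Finset.mem_filter.mp h2).2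
    exact Prod.ext h12 (by rw [e1, e2])
  set interp : L → Polynomial L :=
    fun η => Lagrange.interpolate (xs η) id (fun x => x ^ c) with hinterp
  have hinterpdeg : ∀ η ∈ Ts, ∀ a : ℕ, c ≤ a → (interp η).coeff a = 0 := by
    intro η hη a hca
    apply Polynomial.coeff_eq_zero_of_degree_lt
    have h1 : (interp η).degree < ((xs η).card : WithBot ℕ) :=
      Lagrange.degree_interpolate_lt _ (Set.injOn_id _)
    have h2 : (xs η).card ≤ a := by
      have h3 := (Finset.mem_filter.mp hη).2
      have h4 := hxscard η
      omega
    exact lt_of_lt_of_le h1 (by exact_mod_cast h2)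
  set q : Polynomial (Polynomial L) :=
    ∑ η ∈ Ts, (interp η).map (Polynomial.C) * Polynomial.C (Lagrange.basis Ts id η) with hq
  have hqcoeff : ∀ a : ℕ, c ≤ a → q.coeff a = 0 := by
    intro a hca
    rw [hq, Polynomial.finset_sum_coeff]
    apply Finset.sum_eq_zero
    intro η hη
    rw [Polynomial.coeff_mul_C, Polynomial.coeff_map, hinterpdeg η hη a hca, map_zero, zero_mul]
  set g0 : Polynomial (Polynomial L) :=
    Polynomial.C Pi * (Polynomial.X ^ c - q) with hg0
  have hg0top : g0.coeff c = Pi := by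
    rw [hg0, Polynomial.coeff_C_mul, Polynomial.coeff_sub, Polynomial.coeff_X_pow,
      if_pos rfl, hqcoeff c le_rfl, sub_zero, mul_one]
  have hg0hi : ∀ a : ℕ, c < a → g0.coeff a = 0 := by
    intro a hca
    rw [hg0, Polynomial.coeff_C_mul, Polynomial.coeff_sub, Polynomial.coeff_X_pow,
      if_neg (by omega), hqcoeff a (le_of_lt hca), sub_zero, mul_zero]
  refine ⟨toF g0, ⟨?_, ?_⟩, ?_⟩
  · rw [Finsupp.mem_support_iff, toF_apply, hg0top, hmu, ← hPideg]
    rw [hPimonic.coeff_natDegree]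
    exact one_ne_zero
  · rintro ⟨a, b⟩ hm
    rw [Finsupp.mem_support_iff, toF_apply] at hm
    rcases lt_trichotomy a c with h | h | h
    · exact Or.inl h
    · subst h
      rw [hg0top] at hm
      refine Or.inr ⟨rfl, ?_⟩
      have := Polynomial.le_natDegree_of_ne_zero hm
      rw [hPideg] at this
      exact this
    · rw [hg0hi a h, Polynomial.coeff_zero] at hm
      exact absurd rfl hm
  · intro P hP
    rw [polyEval_toF, hg0]
    have hyT : P.2 ∈ T := Finset.mem_image_of_mem _ hP
    rw [Polynomial.eval₂_mul, Polynomial.eval₂_sub, Polynomial.eval₂_C, Polynomial.eval₂_X_pow]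
    by_cases hyb : P.2 ∈ Tb
    · have : Polynomial.eval P.2 Pi = 0 := by
        rw [hPi, Polynomial.eval_prod]
        exact Finset.prod_eq_zero hyb (by simp)
      simp only [Polynomial.coe_evalRingHom] at this ⊢
      rw [this, zero_mul]
    · have hyTs : P.2 ∈ Ts := by
        rw [hTs, Finset.mem_filter]
        rw [hTb, Finset.mem_filter] at hyb
        exact ⟨hyT, fun hcontra => hyb ⟨hyT, hcontra⟩⟩
      have hxmem : P.1 ∈ xs P.2 := by
        apply Finset.mem_image_of_mem
        exact Finset.mem_filter.mpr ⟨hP, rfl⟩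
      have hcomp : (Polynomial.evalRingHom P.2).comp (Polynomial.C : L →+* Polynomial L)
          = RingHom.id L := by
        apply RingHom.ext
        intro l
        simp
      have hqeval : Polynomial.eval₂ (Polynomial.evalRingHom P.2) P.1 q = P.1 ^ c := by
        rw [hq]
        rw [Polynomial.eval₂_finset_sum]
        have hterm : ∀ η ∈ Ts,
            Polynomial.eval₂ (Polynomial.evalRingHom P.2) P.1
              ((interp η).map (Polynomial.C) * Polynomial.C (Lagrange.basis Ts id η))
            = (interp η).eval P.1 * (Lagrange.basis Ts id η).eval P.2 := by
          intro η hη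
          rw [Polynomial.eval₂_mul, Polynomial.eval₂_C, Polynomial.eval₂_map, hcomp]
          simp only [Polynomial.coe_evalRingHom]
          rfl
        rw [Finset.sum_congr rfl hterm]
        rw [Finset.sum_eq_single_of_mem P.2 hyTs]
        · have hb1 : (Lagrange.basis Ts id P.2).eval (id P.2) = 1 :=
            Lagrange.eval_basis_self (Set.injOn_id _) hyTs
          have hi1 : Polynomial.eval (id P.1) (interp P.2) = P.1 ^ c :=
            Lagrange.eval_interpolate_at_node _ (Set.injOn_id _) hxmem
          simp only [id] at hb1 hi1
          rw [hb1, hi1, mul_one]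
        · intro η hη hne
          have hb0 : (Lagrange.basis Ts id η).eval (id P.2) = 0 :=
            Lagrange.eval_basis_of_ne hne hyTs
          simp only [id] at hb0
          rw [hb0, mul_zero]
      rw [hqeval]
      simp

/-- under the lexicographic order (X₁ > X₂), a minimal set of polynomials
for the subarray of the syndrome table indexed by B(2t+1) is a Gröbner basis of Λ(U). -/
theorem groebner_from_hyperbolic_lex
    (q : ℕ) (hq : IsPrimePow q)
    (F : Type) [Field F] [Fintype F] (hF : Fintype.card F = q)
    (L : Type) [Field L] [Algebra F L]
    (r₁ r₂ : ℕ) (hr₁ : 0 < r₁) (hr₂ : 0 < r₂) (hco : Nat.Coprime q (r₁ * r₂))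
    (α₁ α₂ : L) (hα₁ : IsPrimitiveRoot α₁ r₁) (hα₂ : IsPrimitiveRoot α₂ r₂)
    (t : ℕ) (ht1 : 1 ≤ t) (ht4 : t ≤ 4) (htr1 : t ≤ r₁ / 2) (htr2 : t ≤ r₂ / 2)
    (e : Fin r₁ × Fin r₂ → F) (hω : wt e ≤ t) (τ : Fin r₁ × Fin r₂)
    (U : ℕ × ℕ → L) (hU : U = synTable α₁ α₂ τ e)
    (hnz : ∃ j < t, U (0, j) ≠ 0)
    (d : ℕ) (hd : 0 < d)
    (f : Fin d → (ℕ × ℕ) →₀ L) (s : Fin d → ℕ × ℕ)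
    (hLP : ∀ i, IsLP lexMonOrd (f i) (s i))
    (hdec1 : ∀ i j : Fin d, i < j → (s j).1 < (s i).1)
    (hlast1 : (s ⟨d - 1, Nat.sub_lt hd Nat.one_pos⟩).1 = 0)
    (hinc2 : ∀ i j : Fin d, i < j → (s i).2 < (s j).2)
    (hfirst2 : (s ⟨0, hd⟩).2 = 0)
    (hgen : ∀ i : Fin d, ∀ k ∈ hypB r₁ r₂ (2 * t + 1),
      (s i).1 ≤ k.1 → (s i).2 ≤ k.2 → fApp U (f i) (s i) k = 0)
    (hmin : ∀ (g : (ℕ × ℕ) →₀ L) (sg : ℕ × ℕ), IsLP lexMonOrd g sg →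
      (∃ i : Fin d, ∃ h : i.1 + 1 < d,
        sg.1 ≤ (s i).1 - 1 ∧ sg.2 ≤ (s ⟨i.1 + 1, h⟩).2 - 1) →
      ∃ k ∈ hypB r₁ r₂ (2 * t + 1), sg.1 ≤ k.1 ∧ sg.2 ≤ k.2 ∧ fApp U g sg k ≠ 0) :
    (∀ i : Fin d, GeneratesU lexMonOrd U (f i)) ∧
    (∀ (g : (ℕ × ℕ) →₀ L) (sg : ℕ × ℕ), IsLP lexMonOrd g sg → GeneratesU lexMonOrd U g →
      ∃ i : Fin d, (s i).1 ≤ sg.1 ∧ (s i).2 ≤ sg.2) := by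
  classical
  set X : Fin r₁ × Fin r₂ → L × L := fun p => (α₁ ^ (p.1 : ℕ), α₂ ^ (p.2 : ℕ)) with hXdef
  have hXinj : Function.Injective X := by
    intro p p' hpp
    rw [Prod.ext_iff] at hpp
    have e1 : (p.1 : ℕ) = (p'.1 : ℕ) := hα₁.pow_inj p.1.isLt p'.1.isLt hpp.1
    have e2 : (p.2 : ℕ) = (p'.2 : ℕ) := hα₂.pow_inj p.2.isLt p'.2.isLt hpp.2
    exact Prod.ext (Fin.ext e1) (Fin.ext e2)
  set Cp : Fin r₁ × Fin r₂ → L := fun p =>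
    algebraMap F L (e p) * (X p).1 ^ (τ.1 : ℕ) * (X p).2 ^ (τ.2 : ℕ) with hCp
  have hUk : ∀ k1 k2 : ℕ, U (k1, k2)
      = ∑ p : Fin r₁ × Fin r₂, Cp p * (X p).1 ^ k1 * (X p).2 ^ k2 := by
    intro k1 k2
    rw [hU]
    unfold synTable
    apply Finset.sum_congr rfl
    intro p _
    simp only [hCp, hXdef]
    ring
  have hfApp : ∀ (g : (ℕ × ℕ) →₀ L) (sg n : ℕ × ℕ), sg.1 ≤ n.1 → sg.2 ≤ n.2 →
      fApp U g sg n = ∑ p : Fin r₁ × Fin r₂,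
        Cp p * (X p).1 ^ (n.1 - sg.1) * (X p).2 ^ (n.2 - sg.2)
          * polyEval g (X p).1 (X p).2 := by
    intro g sg n h1 h2
    unfold fApp
    rw [if_pos ⟨h1, h2⟩]
    have hsum : ∀ m ∈ g.support, g m * U (m.1 + n.1 - sg.1, m.2 + n.2 - sg.2)
        = ∑ p : Fin r₁ × Fin r₂,
            g m * (Cp p * ((X p).1 ^ (n.1 - sg.1) * (X p).2 ^ (n.2 - sg.2)
              * ((X p).1 ^ m.1 * (X p).2 ^ m.2))) := by
      intro m _
      rw [hUk, Finset.mul_sum]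
      apply Finset.sum_congr rfl
      intro p _
      have e1 : m.1 + n.1 - sg.1 = m.1 + (n.1 - sg.1) := by omega
      have e2 : m.2 + n.2 - sg.2 = m.2 + (n.2 - sg.2) := by omega
      rw [e1, e2, pow_add, pow_add]
      ring
    rw [Finset.sum_congr rfl hsum, Finset.sum_comm]
    apply Finset.sum_congr rfl
    intro p _
    unfold polyEval
    rw [Finset.mul_sum]
    apply Finset.sum_congr rfl
    intro m _
    ring
  have hvanish : ∀ (g : (ℕ × ℕ) →₀ L) (sg : ℕ × ℕ),
      (∀ p : Fin r₁ × Fin r₂, e p ≠ 0 → polyEval g (X p).1 (X p).2 = 0) →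
      ∀ n, fApp U g sg n = 0 := by
    intro g sg hg n
    by_cases hc : sg.1 ≤ n.1 ∧ sg.2 ≤ n.2
    · rw [hfApp g sg n hc.1 hc.2]
      apply Finset.sum_eq_zero
      intro p _
      by_cases hep : e p = 0
      · simp [hCp, hep]
      · rw [hg p hep]; ring
    · unfold fApp; rw [if_neg hc]
  set S : Finset (L × L) := (Finset.univ.filter (fun p => e p ≠ 0)).image X with hS
  have hScard : S.card ≤ t := by
    have h1 : S.card = (Finset.univ.filter (fun p => e p ≠ 0)).card :=
      Finset.card_image_of_injOn (Function.Injective.injOn hXinj)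
    have h2 : wt e = (Finset.univ.filter (fun p => e p ≠ 0)).card := by
      rw [wt, Set.ncard_eq_toFinset_card', Set.toFinset_setOf]
    omega
  have hmemS : ∀ p : Fin r₁ × Fin r₂, e p ≠ 0 → X p ∈ S := fun p hp =>
    Finset.mem_image_of_mem _ (Finset.mem_filter.mpr ⟨Finset.mem_univ _, hp⟩)
  have key : ∀ (c : ℕ) (j : ℕ) (hj : j + 1 < d),
      c ≤ (s ⟨j, by omega⟩).1 - 1 → muS S c ≤ (s ⟨j + 1, hj⟩).2 - 1 → False := by
    intro c j hj hc hm
    obtain ⟨g, hgLP, hgvan⟩ := construct S c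
    obtain ⟨k, hk, hk1, hk2, hkne⟩ := hmin g (c, muS S c) hgLP ⟨⟨j, by omega⟩, hj, hc, hm⟩
    exact hkne (hvanish g (c, muS S c) (fun p hp => hgvan (X p) (hmemS p hp)) k)
  have hfeas : ∀ i : Fin d,
      ((s i).2 = 0 ∧ ((s i).1 = 0 ∨ 1 ≤ muS S ((s i).1 - 1))) ∨
      (1 ≤ (s i).1 ∧ 1 ≤ (s i).2 ∧ (s i).2 ≤ muS S ((s i).1) ∧
        (s i).2 + 1 ≤ muS S ((s i).1 - 1)) ∨
      ((s i).1 = 0 ∧ (s i).2 ≤ muS S 0) := by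
    intro i
    by_cases hi0 : i.1 = 0
    · have hieq : (⟨0, hd⟩ : Fin d) = i := Fin.ext hi0.symm
      have hs2 : (s i).2 = 0 := by rw [← hieq]; exact hfirst2
      by_cases hs1 : (s i).1 = 0
      · exact Or.inl ⟨hs2, Or.inl hs1⟩
      · left
        refine ⟨hs2, Or.inr ?_⟩
        by_contra hcon
        push_neg at hcon
        have hd2 : 1 < d := by
          by_contra hdc
          have hieq2 : (⟨d - 1, Nat.sub_lt hd Nat.one_pos⟩ : Fin d) = i :=
            Fin.ext (show d - 1 = i.1 by omega)
          rw [hieq2] at hlast1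
          exact hs1 hlast1
        apply key ((s i).1 - 1) 0 (by omega)
        · have hieq3 : (⟨0, by omega⟩ : Fin d) = i := Fin.ext hi0.symm
          rw [hieq3]
        · omega
    · by_cases hilast : i.1 = d - 1
      · right; right
        have hieq : (⟨d - 1, Nat.sub_lt hd Nat.one_pos⟩ : Fin d) = i := Fin.ext hilast.symm
        have hs1 : (s i).1 = 0 := by rw [← hieq]; exact hlast1
        refine ⟨hs1, ?_⟩
        by_contra hcon
        push_neg at hcon
        have hd2 : 1 < d := by omega
        apply key 0 (d - 2) (by omega)
        · exact Nat.zero_le _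
        · have hieq2 : (⟨d - 2 + 1, by omega⟩ : Fin d) = i :=
            Fin.ext (show d - 2 + 1 = i.1 by omega)
          rw [hieq2]; omega
      · right; left
        have hd2 : 1 < d := by omega
        have hlt : i.1 < d - 1 := by
          have := i.isLt; omega
        have hs1pos : 1 ≤ (s i).1 := by
          have h := hdec1 i ⟨d - 1, Nat.sub_lt hd Nat.one_pos⟩ (by
            rw [Fin.lt_def]; exact hlt)
          omega
        have hs2pos : 1 ≤ (s i).2 := by
          have h := hinc2 ⟨0, hd⟩ i (by rw [Fin.lt_def]; exact (show 0 < i.1 by omega))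
          rw [hfirst2] at h
          omega
        refine ⟨hs1pos, hs2pos, ?_, ?_⟩
        · by_contra hcon
          push_neg at hcon
          apply key ((s i).1) (i.1 - 1) (by omega)
          · have h := hdec1 ⟨i.1 - 1, by omega⟩ i
              (by rw [Fin.lt_def]; exact (show i.1 - 1 < i.1 by omega))
            omega
          · have hieq2 : (⟨i.1 - 1 + 1, by omega⟩ : Fin d) = i :=
              Fin.ext (show i.1 - 1 + 1 = i.1 by omega)
            rw [hieq2]; omega
        · by_contra hcon
          push_neg at hcon
          apply key ((s i).1 - 1) i.1 (by omega)
          · have hieq2 : (⟨i.1, by omega⟩ : Fin d) = i := Fin.ext rfl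
            rw [hieq2]
          · have h := hinc2 i ⟨i.1 + 1, by omega⟩
              (by rw [Fin.lt_def]; exact (show i.1 < i.1 + 1 by omega))
            omega
  constructor
  · -- each f i generates U
    intro i
    have hcase := hfeas i
    have hBB : ∀ a b : ℕ, b < muS S a →
        (((s i).1 + a, (s i).2 + b) : ℕ × ℕ) ∈ hypB r₁ r₂ (2 * t + 1) := by
      intro a b hb
      have hsum5 := muS_sum_le S
      obtain ⟨hp, h1, h2⟩ := claimArith t (muS S) (muS_anti S) (by omega) ht4
        (s i).1 (s i).2 hcase a b hb
      refine ⟨show (s i).1 + a < r₁ by omega, show (s i).2 + b < r₂ by omega, ?_, ?_, ?_⟩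
      · show ((s i).1 + a + 1) * ((s i).2 + b + 1) ≤ 2 * t + 1
        exact hp
      · simp only [ne_eq, Prod.mk.injEq, not_and]
        intro hfst
        omega
      · simp only [ne_eq, Prod.mk.injEq, not_and]
        intro hfst
        omega
    set vf : L × L → L :=
      Function.extend X (fun p => Cp p * polyEval (f i) (X p).1 (X p).2) 0 with hvf
    have hsum0 : ∀ a b : ℕ, b < muS S a →
        ∑ Q ∈ S, vf Q * Q.1 ^ a * Q.2 ^ b = 0 := by
      intro a b hb
      have hstep1 : ∑ Q ∈ S, vf Q * Q.1 ^ a * Q.2 ^ b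
          = ∑ p ∈ Finset.univ.filter (fun p => e p ≠ 0),
              vf (X p) * (X p).1 ^ a * (X p).2 ^ b := by
        rw [hS]
        exact Finset.sum_image (fun p1 _ p2 _ h12 => hXinj h12)
      have hstep2 : ∀ p : Fin r₁ × Fin r₂, vf (X p)
          = Cp p * polyEval (f i) (X p).1 (X p).2 := by
        intro p
        rw [hvf]
        exact Function.Injective.extend_apply hXinj _ _ p
      have hstep3 : ∑ p ∈ Finset.univ.filter (fun p => e p ≠ 0),
            vf (X p) * (X p).1 ^ a * (X p).2 ^ b
          = ∑ p : Fin r₁ × Fin r₂,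
              Cp p * (X p).1 ^ a * (X p).2 ^ b * polyEval (f i) (X p).1 (X p).2 := by
        rw [Finset.sum_filter]
        apply Finset.sum_congr rfl
        intro p _
        by_cases hep : e p = 0
        · rw [if_neg (by simpa using hep)]
          simp [hCp, hep]
        · rw [if_pos hep, hstep2 p]
          ring
      have hstep4 : fApp U (f i) (s i) ((s i).1 + a, (s i).2 + b)
          = ∑ p : Fin r₁ × Fin r₂,
              Cp p * (X p).1 ^ a * (X p).2 ^ b * polyEval (f i) (X p).1 (X p).2 := by
        rw [hfApp (f i) (s i) ((s i).1 + a, (s i).2 + b)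
          (Nat.le_add_right _ _) (Nat.le_add_right _ _)]
        apply Finset.sum_congr rfl
        intro p _
        have e1 : ((s i).1 + a, (s i).2 + b).1 - (s i).1 = a :=
          show (s i).1 + a - (s i).1 = a by omega
        have e2 : ((s i).1 + a, (s i).2 + b).2 - (s i).2 = b :=
          show (s i).2 + b - (s i).2 = b by omega
        rw [e1, e2]
      rw [hstep1, hstep3, ← hstep4]
      exact hgen i _ (hBB a b hb) (Nat.le_add_right _ _) (Nat.le_add_right _ _)
    have hvall := lemS S.card S rfl vf hsum0
    have heval0 : ∀ p : Fin r₁ × Fin r₂, e p ≠ 0 → polyEval (f i) (X p).1 (X p).2 = 0 := by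
      intro p hp
      have h1 := hvall (X p) (hmemS p hp)
      rw [hvf] at h1
      rw [Function.Injective.extend_apply hXinj _ _ p] at h1
      have hCpne : Cp p ≠ 0 := by
        have h1' : algebraMap F L (e p) ≠ 0 :=
          fun hc => hp ((algebraMap F L).injective (by rw [hc, map_zero]))
        have h2' : (X p).1 ≠ 0 := by
          simp only [hXdef]
          exact pow_ne_zero _ (hα₁.ne_zero hr₁.ne')
        have h3' : (X p).2 ≠ 0 := by
          simp only [hXdef]
          exact pow_ne_zero _ (hα₂.ne_zero hr₂.ne')
        simp only [hCp]
        exact mul_ne_zero (mul_ne_zero h1' (pow_ne_zero _ h2')) (pow_ne_zero _ h3')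
      exact (mul_eq_zero.mp h1).resolve_left hCpne
    exact ⟨s i, hLP i, hvanish (f i) (s i) heval0⟩
  · -- minimality of leading exponents
    intro g sg hsg hgenU
    by_contra hno
    push_neg at hno
    have hP : ∃ j : ℕ, ∃ hj : j < d, (s ⟨j, hj⟩).1 ≤ sg.1 := by
      exact ⟨d - 1, Nat.sub_lt hd Nat.one_pos, by rw [hlast1]; omega⟩
    set j0 := Nat.find hP with hj0def
    obtain ⟨hj0d, hj0le⟩ := Nat.find_spec hP
    have hj0min : ∀ j, j < j0 → ∀ hj : j < d, ¬ (s ⟨j, hj⟩).1 ≤ sg.1 := by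
      intro j hjlt hj hc
      exact Nat.find_min hP hjlt ⟨hj, hc⟩
    have hsg2 : sg.2 < (s ⟨j0, hj0d⟩).2 := hno ⟨j0, hj0d⟩ hj0le
    have hj0pos : 0 < j0 := by
      by_contra hc
      have hieq : (⟨j0, hj0d⟩ : Fin d) = ⟨0, hd⟩ := Fin.ext (show j0 = 0 by omega)
      rw [hieq, hfirst2] at hsg2
      omega
    have hjm1 : j0 - 1 < d := by omega
    have hjlt1 : ¬ (s ⟨j0 - 1, hjm1⟩).1 ≤ sg.1 := hj0min (j0 - 1) (by omega) hjm1
    have hfin1 : (⟨j0 - 1, hjm1⟩ : Fin d).1 + 1 < d := show j0 - 1 + 1 < d by omega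
    have hieq : (⟨(⟨j0 - 1, hjm1⟩ : Fin d).1 + 1, hfin1⟩ : Fin d) = ⟨j0, hj0d⟩ :=
      Fin.ext (show j0 - 1 + 1 = j0 by omega)
    obtain ⟨k, hk, hk1, hk2, hkne⟩ := hmin g sg hsg
      ⟨⟨j0 - 1, hjm1⟩, hfin1, by omega, by rw [hieq]; omega⟩
    obtain ⟨s', hs'LP, hs'all⟩ := hgenU
    have hseq : s' = sg :=
      lexMonOrd.antisymm s' sg (hsg.2 s' hs'LP.1) (hs'LP.2 sg hsg.1)
    rw [hseq] at hs'all
    exact hkne (hs'all k)
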